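/- Let n ≥ 1 and let ρ : ℝⁿ → [0, 1] be measurable with support contained in the closed unit ball and with ∫_{ℝⁿ} ρ = 1; for η > 0 set ρ_η(x) := η^{−n} ρ(x/η). Then for every measurable square-integrable f : ℝⁿ → ℝ, every η > 0 and every α ∈ (0, 1), one has ∫_{ℝⁿ} |(ρ_η * f)(x) − f(x)|² dx ≤ η^{2α} · ∫_{ℝⁿ} ∫_{ℝⁿ} |f(x − y) − f(x)|² · ‖y‖^{−(n + 2α)} dy dx, where the right-hand side is allowed to be infinite. -/

import Mathlib

open MeasureTheory
open scoped Convolution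

/-- Euclidean core of estimate (phasefield_Besov_final): the `L²`-distance between a
function and its mollification at scale `η` is controlled by `η^{2α}` times its
squared Gagliardo-type seminorm of order `α` (the right-hand side may be infinite). -/
theorem mollification_L2_rate
    (n : ℕ) (hn : 1 ≤ n) (ρ : EuclideanSpace ℝ (Fin n) → ℝ)
    (hρ_meas : Measurable ρ)
    (hρ_nonneg : ∀ x, 0 ≤ ρ x) (hρ_le_one : ∀ x, ρ x ≤ 1)
    (hρ_supp : Function.support ρ ⊆ Metric.closedBall 0 1)
    (hρ_int : (∫ x, ρ x) = 1)
    (f : EuclideanSpace ℝ (Fin n) → ℝ) (hf_meas : Measurable f)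
    (hf : MemLp f 2 volume)
    (η : ℝ) (hη : 0 < η) (α : ℝ) (hα : 0 < α) (hα' : α < 1) :
    (∫⁻ x, ENNReal.ofReal
        ((((fun x => η ^ (-(n : ℤ)) * ρ (η⁻¹ • x)) ⋆ f) x - f x) ^ 2)) ≤
      ENNReal.ofReal (η ^ (2 * α)) *
        ∫⁻ x, ∫⁻ y,
          ENNReal.ofReal ((f (x - y) - f x) ^ 2 * ‖y‖ ^ (-((n : ℝ) + 2 * α))) := by
  set g : EuclideanSpace ℝ (Fin n) → ℝ := fun x => η ^ (-(n : ℤ)) * ρ (η⁻¹ • x) with hgdef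
  have hηn : (0:ℝ) < η ^ (-(n:ℤ)) := zpow_pos hη _
  have hg_meas : Measurable g :=
    measurable_const.mul (hρ_meas.comp (measurable_id.const_smul η⁻¹))
  have hg_nonneg : ∀ x, 0 ≤ g x := fun x => mul_nonneg hηn.le (hρ_nonneg _)
  have hg_le : ∀ x, g x ≤ η ^ (-(n:ℤ)) := fun x => by
    have h := mul_le_mul_of_nonneg_left (hρ_le_one (η⁻¹ • x)) hηn.le
    rw [mul_one] at h
    exact h
  -- integrability of ρ and g
  have hρ_int' : Integrable ρ := by
    by_contra h
    rw [integral_undef h] at hρ_int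
    exact one_ne_zero hρ_int.symm
  have hg_int : Integrable g := by
    exact (hρ_int'.comp_smul (inv_ne_zero hη.ne')).const_mul _
  -- integral of g equals 1
  have hg_integral : (∫ x, g x) = 1 := by
    have h1 : (∫ x, ρ (η⁻¹ • x)) = |((η⁻¹) ^ (Module.finrank ℝ (EuclideanSpace ℝ (Fin n))))⁻¹| •
        ∫ x, ρ x := Measure.integral_comp_smul volume ρ η⁻¹
    have : (∫ x, g x) = ∫ x, η ^ (-(n:ℤ)) * ρ (η⁻¹ • x) := rfl
    rw [this, integral_const_mul, h1, hρ_int, finrank_euclideanSpace_fin]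
    rw [smul_eq_mul, mul_one, inv_pow, inv_inv, abs_of_nonneg (pow_nonneg hη.le _)]
    rw [zpow_neg, zpow_natCast]
    exact inv_mul_cancel₀ (pow_ne_zero _ hη.ne')
  have hg_lintegral : (∫⁻ x, ENNReal.ofReal (g x)) = 1 := by
    rw [← ofReal_integral_eq_lintegral_ofReal hg_int (Filter.Eventually.of_forall hg_nonneg),
      hg_integral, ENNReal.ofReal_one]
  -- g is in L²
  have hg_mem2 : MemLp g 2 volume := by
    rw [memLp_two_iff_integrable_sq hg_meas.aestronglyMeasurable]
    refine (hg_int.const_mul (η ^ (-(n:ℤ)))).mono'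
      ((hg_meas.pow_const 2).aestronglyMeasurable) ?_
    refine Filter.Eventually.of_forall fun x => ?_
    rw [Real.norm_eq_abs, abs_of_nonneg (sq_nonneg _), sq]
    exact mul_le_mul_of_nonneg_right (hg_le x) (hg_nonneg x)
  -- translate of f is in L²
  have hf_trans : ∀ x, MemLp (fun t => f (x - t)) 2 volume := fun x =>
    hf.comp_measurePreserving (Measure.measurePreserving_sub_left volume x)
  -- integrability of the convolution integrand
  have hint1 : ∀ x, Integrable (fun t => g t * f (x - t)) := by
    intro x
    have := (hf_trans x).smul (φ := g) hg_mem2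
      (p := 2) (q := 2) (r := 1) (hpqr := ⟨by rw [ENNReal.inv_two_add_inv_two, inv_one]⟩)
    exact memLp_one_iff_integrable.mp this
  have hint2 : ∀ x, Integrable (fun t => g t * (f (x - t) - f x)) := by
    intro x
    have h := (hint1 x).sub (hg_int.mul_const (f x))
    simp only [mul_sub]; exact h
  -- the convolution minus f written as a single integral
  have hconv : ∀ x, (g ⋆ f) x - f x = ∫ t, g t * (f (x - t) - f x) := by
    intro x
    have h1 : (g ⋆ f) x = ∫ t, g t * f (x - t) := by
      simp [convolution_def, ContinuousLinearMap.lsmul_apply, smul_eq_mul]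
    have h2 : (∫ t, g t * (f (x - t) - f x))
        = (∫ t, g t * f (x - t)) - ∫ t, g t * f x := by
      simp_rw [mul_sub]
      exact integral_sub (hint1 x) (hg_int.mul_const (f x))
    rw [h2, h1, integral_mul_const, hg_integral, one_mul]
  -- pointwise Cauchy–Schwarz (Jensen) step
  have key : ∀ x, ENNReal.ofReal (((g ⋆ f) x - f x) ^ 2)
      ≤ ∫⁻ t, ENNReal.ofReal (g t * (f (x - t) - f x) ^ 2) := by
    intro x
    rw [hconv x]
    have hF_meas : Measurable (fun t : EuclideanSpace ℝ (Fin n) => f (x - t) - f x) :=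
      (hf_meas.comp (measurable_const.sub measurable_id)).sub measurable_const
    -- step 1 : |∫ g F| ≤ ∫ g |F|
    have e1 : |∫ t, g t * (f (x - t) - f x)| ≤ ∫ t, g t * |f (x - t) - f x| := by
      have h := norm_integral_le_integral_norm (μ := volume) (fun t => g t * (f (x - t) - f x))
      simp only [Real.norm_eq_abs] at h
      refine h.trans_eq (integral_congr_ae (Filter.Eventually.of_forall fun t => ?_))
      show |g t * (f (x - t) - f x)| = g t * |f (x - t) - f x|
      rw [abs_mul, abs_of_nonneg (hg_nonneg t)]
    have hGint : Integrable (fun t => g t * |f (x - t) - f x|) := by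
      refine (hint2 x).abs.congr (Filter.Eventually.of_forall fun t => ?_)
      show |g t * (f (x - t) - f x)| = g t * |f (x - t) - f x|
      rw [abs_mul, abs_of_nonneg (hg_nonneg t)]
    have e2 : ENNReal.ofReal (∫ t, g t * |f (x - t) - f x|)
        = ∫⁻ t, ENNReal.ofReal (g t * |f (x - t) - f x|) :=
      ofReal_integral_eq_lintegral_ofReal hGint
        (Filter.Eventually.of_forall fun t => mul_nonneg (hg_nonneg t) (abs_nonneg _))
    -- Hölder's inequality in ℝ≥0∞ with exponents (2, 2)
    set A : EuclideanSpace ℝ (Fin n) → ENNReal :=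
      fun t => ENNReal.ofReal (g t) ^ ((1:ℝ)/2) with hA
    set B : EuclideanSpace ℝ (Fin n) → ENNReal :=
      fun t => ENNReal.ofReal (g t) ^ ((1:ℝ)/2) * ENNReal.ofReal (|f (x - t) - f x|) with hB
    have hA_meas : AEMeasurable A volume :=
      ((ENNReal.measurable_ofReal.comp hg_meas).pow_const _).aemeasurable
    have hB_meas : AEMeasurable B volume :=
      (((ENNReal.measurable_ofReal.comp hg_meas).pow_const _).mul
        (ENNReal.measurable_ofReal.comp hF_meas.abs)).aemeasurable
    have hAA : ∀ t, A t * A t = ENNReal.ofReal (g t) := by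
      intro t
      rw [hA, ← ENNReal.rpow_add_of_nonneg _ _ (by norm_num) (by norm_num)]
      norm_num
    have hAB : ∀ t, ENNReal.ofReal (g t * |f (x - t) - f x|) = (A * B) t := by
      intro t
      simp only [Pi.mul_apply, hB]
      rw [ENNReal.ofReal_mul (hg_nonneg t), ← mul_assoc, hAA]
    have hA2 : ∀ t, A t ^ (2:ℝ) = ENNReal.ofReal (g t) := by
      intro t
      rw [hA, ← ENNReal.rpow_mul]
      norm_num
    have hB2 : ∀ t, B t ^ (2:ℝ) = ENNReal.ofReal (g t * (f (x - t) - f x) ^ 2) := by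
      intro t
      rw [hB, ENNReal.mul_rpow_of_nonneg _ _ (by norm_num), ← ENNReal.rpow_mul]
      norm_num
      rw [ENNReal.ofReal_mul (hg_nonneg t)]
      congr 1
      rw [← ENNReal.ofReal_pow (abs_nonneg _), sq_abs]
    have hconj : Real.HolderConjugate 2 2 := Real.HolderConjugate.two_two
    have holder := ENNReal.lintegral_mul_le_Lp_mul_Lq volume hconj hA_meas hB_meas
    have hAint : (∫⁻ t, A t ^ (2:ℝ)) = 1 := by
      rw [lintegral_congr hA2]; exact hg_lintegral
    have h3 : ENNReal.ofReal (|∫ t, g t * (f (x - t) - f x)|)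
        ≤ (∫⁻ t, ENNReal.ofReal (g t * (f (x - t) - f x) ^ 2)) ^ ((1:ℝ)/2) := by
      calc ENNReal.ofReal (|∫ t, g t * (f (x - t) - f x)|)
          ≤ ENNReal.ofReal (∫ t, g t * |f (x - t) - f x|) := ENNReal.ofReal_le_ofReal e1
        _ = ∫⁻ t, ENNReal.ofReal (g t * |f (x - t) - f x|) := e2
        _ = ∫⁻ t, (A * B) t := lintegral_congr hAB
        _ ≤ (∫⁻ t, A t ^ (2:ℝ)) ^ ((1:ℝ)/2) * (∫⁻ t, B t ^ (2:ℝ)) ^ ((1:ℝ)/2) := holder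
        _ = (∫⁻ t, ENNReal.ofReal (g t * (f (x - t) - f x) ^ 2)) ^ ((1:ℝ)/2) := by
            rw [hAint, ENNReal.one_rpow, one_mul, lintegral_congr hB2]
    have e0 : ENNReal.ofReal ((∫ t, g t * (f (x - t) - f x)) ^ 2)
        = ENNReal.ofReal (|∫ t, g t * (f (x - t) - f x)|) ^ 2 := by
      rw [← ENNReal.ofReal_pow (abs_nonneg _), sq_abs]
    rw [e0]
    calc ENNReal.ofReal (|∫ t, g t * (f (x - t) - f x)|) ^ 2
        ≤ ((∫⁻ t, ENNReal.ofReal (g t * (f (x - t) - f x) ^ 2)) ^ ((1:ℝ)/2)) ^ 2 :=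
          pow_le_pow_left₀ (by positivity) h3 2
      _ = ∫⁻ t, ENNReal.ofReal (g t * (f (x - t) - f x) ^ 2) := by
          rw [← ENNReal.rpow_natCast _ 2, ← ENNReal.rpow_mul]
          norm_num
  -- pointwise kernel bound
  have hbound : ∀ x t, ENNReal.ofReal (g t * (f (x - t) - f x) ^ 2)
      ≤ ENNReal.ofReal (η ^ (2 * α)) *
        ENNReal.ofReal ((f (x - t) - f x) ^ 2 * ‖t‖ ^ (-((n : ℝ) + 2 * α))) := by
    intro x t
    rcases eq_or_ne t 0 with rfl | ht
    · simp [sub_zero, sub_self]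
    rw [← ENNReal.ofReal_mul (by positivity)]
    by_cases hty : ‖t‖ ≤ η
    · apply ENNReal.ofReal_le_ofReal
      have htpos : (0:ℝ) < ‖t‖ := norm_pos_iff.2 ht
      have hexp : -((n:ℝ) + 2 * α) ≤ 0 := neg_nonpos.mpr (by positivity)
      have hkey : g t ≤ η ^ (2*α) * ‖t‖ ^ (-((n:ℝ) + 2*α)) := by
        refine (hg_le t).trans ?_
        have e1 : η ^ (-(n:ℤ)) = η ^ (2*α + (-((n:ℝ) + 2*α))) := by
          rw [← Real.rpow_intCast η (-(n:ℤ))]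
          congr 1
          push_cast
          ring
        rw [e1, Real.rpow_add hη]
        exact mul_le_mul_of_nonneg_left
          (Real.rpow_le_rpow_of_nonpos htpos hty hexp)
          (Real.rpow_nonneg hη.le _)
      calc g t * (f (x-t) - f x)^2
          ≤ (η^(2*α) * ‖t‖ ^ (-((n:ℝ)+2*α))) * (f (x-t)-f x)^2 :=
            mul_le_mul_of_nonneg_right hkey (sq_nonneg _)
        _ = η^(2*α) * ((f (x-t)-f x)^2 * ‖t‖ ^ (-((n:ℝ)+2*α))) := by ring
    · have h0 : ρ (η⁻¹ • t) = 0 := by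
        by_contra h
        have hmem := hρ_supp (Function.mem_support.2 h)
        rw [Metric.mem_closedBall, dist_zero_right, norm_smul, norm_inv,
          Real.norm_eq_abs, abs_of_pos hη] at hmem
        refine hty ?_
        have := (inv_mul_le_iff₀ hη).mp hmem
        linarith
      have hg0 : g t = 0 := by
        show η ^ (-(n:ℤ)) * ρ (η⁻¹ • t) = 0
        rw [h0, mul_zero]
      simp [hg0]
  calc (∫⁻ x, ENNReal.ofReal (((g ⋆ f) x - f x) ^ 2))
      ≤ ∫⁻ x, ∫⁻ t, ENNReal.ofReal (g t * (f (x - t) - f x) ^ 2) := lintegral_mono key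
    _ ≤ ∫⁻ x, ∫⁻ t, ENNReal.ofReal (η ^ (2 * α)) *
          ENNReal.ofReal ((f (x - t) - f x) ^ 2 * ‖t‖ ^ (-((n : ℝ) + 2 * α))) :=
        lintegral_mono fun x => lintegral_mono fun t => hbound x t
    _ = ENNReal.ofReal (η ^ (2 * α)) *
          ∫⁻ x, ∫⁻ y, ENNReal.ofReal ((f (x - y) - f x) ^ 2 * ‖y‖ ^ (-((n : ℝ) + 2 * α))) := by
        simp_rw [lintegral_const_mul' _ _ ENNReal.ofReal_ne_top]
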